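/- arXiv:2512.18282 — 9 statements merged into one kernel-verified Lean document; each statement's English description precedes it below -/
import Mathlib

section
/- Let n ≥ 1 be a natural number, let (a_k)_{k≥0} be a sequence of complex numbers, and let b_m = Σ_{k=0}^m C(m,k) a_k be its binomial transform. Then: Σ_{k=1}^n C(n,k) a_k / k = Σ_{m=1}^n b_m / m − b_0 · H_n, where H_n = Σ_{k=1}^n 1/k is the n-th harmonic number. -/
/-!
Write `f n = ∑_{k=1}^n C(n,k) a_k / k`. Pascal's rule together with
`C(n,k-1) / k = C(n+1,k) / (n+1)` gives `f (n+1) - f n = (b_{n+1} - a_0) / (n+1)`,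
and since `f 0 = 0` and `b_0 = a_0`, the identity follows by telescoping.
-/

open Finset

theorem Finset.sum_Icc_one_eq_sum_range {M : Type*} [AddCommMonoid M] (f : ℕ → M) (n : ℕ) :
    ∑ k ∈ Icc 1 n, f k = ∑ k ∈ range n, f (k + 1) := by
  rw [← Ico_add_one_right_eq_Icc, sum_Ico_eq_sum_range, Nat.add_sub_cancel]
  simp only [add_comm]

section

variable {K : Type*} [Field K] [CharZero K]

theorem Nat.cast_choose_div_add_one (n k : ℕ) :
    (n.choose k : K) / (k + 1) = ((n + 1).choose (k + 1) : K) / (n + 1) := by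
  have h : ((n : K) + 1) * n.choose k = (n + 1).choose (k + 1) * (k + 1) := by
    exact_mod_cast Nat.add_one_mul_choose_eq n k
  rw [div_eq_div_iff (Nat.cast_add_one_ne_zero k) (Nat.cast_add_one_ne_zero n)]
  linear_combination h

theorem sum_Icc_choose_mul_div_add_one_sub (n : ℕ) (a : ℕ → K) :
    ∑ k ∈ Icc 1 (n + 1), ((n + 1).choose k : K) * a k / k
        - ∑ k ∈ Icc 1 n, (n.choose k : K) * a k / k
      = (∑ k ∈ range (n + 2), ((n + 1).choose k : K) * a k - a 0) / (n + 1) := by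
  have hpascal (k : ℕ) :
      ((n + 1).choose (k + 1) : K) * a (k + 1) / (k + 1)
          - (n.choose (k + 1) : K) * a (k + 1) / (k + 1)
        = ((n + 1).choose (k + 1) : K) * a (k + 1) / (n + 1) := by
    rw [← sub_div, ← sub_mul, mul_div_right_comm, mul_div_right_comm _ _ ((n : K) + 1),
      ← Nat.cast_choose_div_add_one, Nat.choose_succ_succ', Nat.cast_add, add_sub_cancel_right]
  have hextend : ∑ k ∈ range n, (n.choose (k + 1) : K) * a (k + 1) / (k + 1)
      = ∑ k ∈ range (n + 1), (n.choose (k + 1) : K) * a (k + 1) / (k + 1) := by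
    simp [sum_range_succ]
  rw [sum_Icc_one_eq_sum_range, sum_Icc_one_eq_sum_range]
  push_cast
  rw [hextend, ← sum_sub_distrib, sum_range_succ' _ (n + 1)]
  simp [hpascal, sum_div]

theorem sum_Icc_choose_mul_div_eq (n : ℕ) (a : ℕ → K) :
    ∑ k ∈ Icc 1 n, (n.choose k : K) * a k / k
      = ∑ m ∈ Icc 1 n, (∑ k ∈ range (m + 1), (m.choose k : K) * a k - a 0) / m := by
  have htelescope := sum_range_sub (fun m => ∑ k ∈ Icc 1 m, (m.choose k : K) * a k / k) n
  simp only [sum_Icc_choose_mul_div_add_one_sub, Icc_eq_empty_of_lt zero_lt_one, sum_empty,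
    sub_zero] at htelescope
  rw [← htelescope, sum_Icc_one_eq_sum_range]
  push_cast
  rfl

end

theorem stmt_2_general (n : ℕ) (a b : ℕ → ℂ)
    (hb : ∀ m, b m = ∑ k ∈ Finset.range (m + 1), (Nat.choose m k : ℂ) * a k) :
    ∑ k ∈ Finset.Icc 1 n, (Nat.choose n k : ℂ) * a k / (k : ℂ) =
      ∑ m ∈ Finset.Icc 1 n, b m / (m : ℂ) -
        b 0 * ∑ k ∈ Finset.Icc 1 n, (1 : ℂ) / (k : ℂ) := by
  have hb0 : b 0 = a 0 := by simp [hb]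
  rw [sum_Icc_choose_mul_div_eq, mul_sum, ← sum_sub_distrib]
  refine sum_congr rfl fun m _ => ?_
  rw [hb0, hb m]
  ring

theorem stmt_2 (n : ℕ) (hn : 1 ≤ n) (a b : ℕ → ℂ)
    (hb : ∀ m, b m = ∑ k ∈ Finset.range (m + 1), (Nat.choose m k : ℂ) * a k) :
    ∑ k ∈ Finset.Icc 1 n, (Nat.choose n k : ℂ) * a k / (k : ℂ) =
      ∑ m ∈ Finset.Icc 1 n, b m / (m : ℂ) -
        b 0 * ∑ k ∈ Finset.Icc 1 n, (1 : ℂ) / (k : ℂ) :=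
  stmt_2_general n a b hb
end

section
/- Let n ≥ 1 be a natural number, let λ ∈ ℂ satisfy λ ≠ 0 and λ + i ≠ 0 for every integer i with 1 ≤ i ≤ n, let (a_k)_{k≥0} be a sequence of complex numbers, and let b_m = Σ_{k=0}^m C(m,k) a_k. Then: Σ_{k=1}^n C(n,k) a_k / (k + λ) = ( n! / ( λ · Π_{i=1}^n (λ + i) ) ) · Σ_{m=1}^n ( Π_{i=0}^{m−1} (λ + i) / m! ) · b_m − b_0 · (1/λ) · ( 1 − n! / Π_{i=1}^n (λ + i) ). -/
open Finset


lemma lemA (lam : ℂ) (k : ℕ) (hk : lam + (k:ℂ) ≠ 0) (n : ℕ) (hn : k ≤ n) :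
    ∑ m ∈ Finset.Icc k n, (Nat.choose m k : ℂ) * (∏ i ∈ Finset.range m, (lam + (i:ℂ))) / (Nat.factorial m : ℂ)
    = (Nat.choose n k : ℂ) * (∏ i ∈ Finset.range (n+1), (lam + (i:ℂ))) / ((lam + (k:ℂ)) * (Nat.factorial n : ℂ)) := by
  induction n, hn using Nat.le_induction with
  | base =>
    rw [Finset.Icc_self, Finset.sum_singleton, Finset.prod_range_succ]
    have hf : (Nat.factorial k : ℂ) ≠ 0 := Nat.cast_ne_zero.mpr (Nat.factorial_ne_zero k)
    field_simp
  | succ n hn ih =>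
    rw [Finset.sum_Icc_succ_top (by omega), ih, Finset.prod_range_succ (n := n+1)]
    have hf : (Nat.factorial n : ℂ) ≠ 0 := Nat.cast_ne_zero.mpr (Nat.factorial_ne_zero n)
    have hn1 : ((n:ℂ) + 1) ≠ 0 := Nat.cast_add_one_ne_zero n
    have key : (Nat.choose n k : ℂ) * ((n:ℂ) + 1) = (Nat.choose (n+1) k : ℂ) * ((n:ℂ) + 1 - (k:ℂ)) := by
      have h2 := congrArg (Nat.cast : ℕ → ℂ) (Nat.choose_mul_succ_eq n k)
      push_cast [Nat.cast_sub (by omega : k ≤ n+1)] at h2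
      exact h2
    rw [Nat.factorial_succ]
    push_cast
    rw [div_add_div _ _ (mul_ne_zero hk hf) (mul_ne_zero hn1 hf),
      div_eq_div_iff (mul_ne_zero (mul_ne_zero hk hf) (mul_ne_zero hn1 hf))
        (mul_ne_zero hk (mul_ne_zero hn1 hf))]
    linear_combination (lam + (k:ℂ)) * ((n:ℂ)+1) * (Nat.factorial n : ℂ)^2 *
      (∏ i ∈ Finset.range (n+1), (lam + (i:ℂ))) * key

lemma lemB (lam : ℂ) (hlam : lam ≠ 0) (n : ℕ) (hn : 1 ≤ n) :
    ∑ m ∈ Finset.Icc 1 n, (∏ i ∈ Finset.range m, (lam + (i:ℂ))) / (Nat.factorial m : ℂ)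
    = (∏ i ∈ Finset.range (n+1), (lam + (i:ℂ))) / (lam * (Nat.factorial n : ℂ)) - 1 := by
  induction n, hn using Nat.le_induction with
  | base =>
    rw [Finset.Icc_self, Finset.sum_singleton]
    simp [Finset.prod_range_succ]
    field_simp
    ring
  | succ n hn ih =>
    rw [Finset.sum_Icc_succ_top (by omega), ih, Finset.prod_range_succ (n := n+1),
      Nat.factorial_succ]
    have hf : (Nat.factorial n : ℂ) ≠ 0 := Nat.cast_ne_zero.mpr (Nat.factorial_ne_zero n)
    have hn1 : ((n:ℂ) + 1) ≠ 0 := Nat.cast_add_one_ne_zero n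
    push_cast
    field_simp
    ring


theorem stmt_3 (n : ℕ) (hn : 1 ≤ n) (lam : ℂ) (hlam : lam ≠ 0)
    (hli : ∀ i : ℕ, 1 ≤ i → i ≤ n → lam + (i : ℂ) ≠ 0) (a b : ℕ → ℂ)
    (hb : ∀ m, b m = ∑ k ∈ Finset.range (m + 1), (Nat.choose m k : ℂ) * a k) :
    ∑ k ∈ Finset.Icc 1 n, (Nat.choose n k : ℂ) * a k / ((k : ℂ) + lam) =
      ((Nat.factorial n : ℂ) / (lam * ∏ i ∈ Finset.Icc 1 n, (lam + (i : ℂ)))) *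
          ∑ m ∈ Finset.Icc 1 n,
            (∏ i ∈ Finset.range m, (lam + (i : ℂ))) / (Nat.factorial m : ℂ) * b m -
        b 0 * ((1 / lam) *
          (1 - (Nat.factorial n : ℂ) / ∏ i ∈ Finset.Icc 1 n, (lam + (i : ℂ)))) := by
  have ha0 : b 0 = a 0 := by simpa using hb 0
  have hfn : (Nat.factorial n : ℂ) ≠ 0 := Nat.cast_ne_zero.mpr (Nat.factorial_ne_zero n)
  have hprod : lam * ∏ i ∈ Finset.Icc 1 n, (lam + (i:ℂ)) = ∏ i ∈ Finset.range (n+1), (lam + (i:ℂ)) := by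
    rw [Finset.prod_range_succ', ← Finset.Ico_add_one_right_eq_Icc, Finset.prod_Ico_eq_prod_range]
    push_cast
    simp only [add_zero]
    rw [mul_comm]
    exact congrArg (fun z => z * lam) (Finset.prod_congr rfl fun i _ => by ring)
  have hQne : (∏ i ∈ Finset.Icc 1 n, (lam + (i:ℂ))) ≠ 0 := by
    apply Finset.prod_ne_zero_iff.mpr
    intro i hi
    exact hli i (Finset.mem_Icc.mp hi).1 (Finset.mem_Icc.mp hi).2
  have hsum : ∑ m ∈ Finset.Icc 1 n,
        (∏ i ∈ Finset.range m, (lam + (i:ℂ))) / (Nat.factorial m : ℂ) * b m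
      = (∑ m ∈ Finset.Icc 1 n, (∏ i ∈ Finset.range m, (lam + (i:ℂ))) / (Nat.factorial m : ℂ)) * a 0
        + ∑ k ∈ Finset.Icc 1 n,
            a k * ((Nat.choose n k : ℂ) * (∏ i ∈ Finset.range (n+1), (lam + (i:ℂ)))
              / ((lam + (k:ℂ)) * (Nat.factorial n : ℂ))) := by
    have step1 : ∀ m ∈ Finset.Icc 1 n,
        (∏ i ∈ Finset.range m, (lam + (i:ℂ))) / (Nat.factorial m : ℂ) * b m
        = (∏ i ∈ Finset.range m, (lam + (i:ℂ))) / (Nat.factorial m : ℂ) * a 0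
          + ∑ k ∈ Finset.Ico 1 (m+1),
              (Nat.choose m k : ℂ) * (∏ i ∈ Finset.range m, (lam + (i:ℂ))) / (Nat.factorial m : ℂ) * a k := by
      intro m hm
      rw [hb m, Finset.range_eq_Ico (m+1), Finset.sum_eq_sum_Ico_succ_bot (by omega), mul_add,
        Finset.mul_sum]
      congr 1
      · simp
      · exact Finset.sum_congr rfl (fun k _ => by ring)
    calc ∑ m ∈ Finset.Icc 1 n, (∏ i ∈ Finset.range m, (lam + (i:ℂ))) / (Nat.factorial m : ℂ) * b m
        = ∑ m ∈ Finset.Icc 1 n, ((∏ i ∈ Finset.range m, (lam + (i:ℂ))) / (Nat.factorial m : ℂ) * a 0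
          + ∑ k ∈ Finset.Ico 1 (m+1),
              (Nat.choose m k : ℂ) * (∏ i ∈ Finset.range m, (lam + (i:ℂ))) / (Nat.factorial m : ℂ) * a k) :=
          Finset.sum_congr rfl step1
      _ = (∑ m ∈ Finset.Icc 1 n, (∏ i ∈ Finset.range m, (lam + (i:ℂ))) / (Nat.factorial m : ℂ)) * a 0
          + ∑ m ∈ Finset.Ico 1 (n+1), ∑ k ∈ Finset.Ico 1 (m+1),
              (Nat.choose m k : ℂ) * (∏ i ∈ Finset.range m, (lam + (i:ℂ))) / (Nat.factorial m : ℂ) * a k := by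
          rw [Finset.sum_add_distrib, ← Finset.sum_mul, Finset.Ico_add_one_right_eq_Icc]
      _ = (∑ m ∈ Finset.Icc 1 n, (∏ i ∈ Finset.range m, (lam + (i:ℂ))) / (Nat.factorial m : ℂ)) * a 0
          + ∑ k ∈ Finset.Ico 1 (n+1), ∑ m ∈ Finset.Ico k (n+1),
              (Nat.choose m k : ℂ) * (∏ i ∈ Finset.range m, (lam + (i:ℂ))) / (Nat.factorial m : ℂ) * a k := by
          rw [Finset.sum_Ico_Ico_comm 1 (n+1)
            (fun k m => (Nat.choose m k : ℂ) * (∏ i ∈ Finset.range m, (lam + (i:ℂ))) / (Nat.factorial m : ℂ) * a k)]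
      _ = (∑ m ∈ Finset.Icc 1 n, (∏ i ∈ Finset.range m, (lam + (i:ℂ))) / (Nat.factorial m : ℂ)) * a 0
          + ∑ k ∈ Finset.Icc 1 n,
            a k * ((Nat.choose n k : ℂ) * (∏ i ∈ Finset.range (n+1), (lam + (i:ℂ)))
              / ((lam + (k:ℂ)) * (Nat.factorial n : ℂ))) := by
          rw [Finset.Ico_add_one_right_eq_Icc]
          congr 1
          refine Finset.sum_congr rfl (fun k hk => ?_)
          obtain ⟨hk1, hk2⟩ := Finset.mem_Icc.mp hk
          rw [Finset.Ico_add_one_right_eq_Icc, ← Finset.sum_mul, lemA lam k (hli k hk1 hk2) n hk2]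
          ring
  rw [hsum, lemB lam hlam n hn, ha0, mul_add, Finset.mul_sum]
  have hterm : ∀ k ∈ Finset.Icc 1 n,
      ((Nat.factorial n : ℂ) / (lam * ∏ i ∈ Finset.Icc 1 n, (lam + (i:ℂ)))) *
        (a k * ((Nat.choose n k : ℂ) * (∏ i ∈ Finset.range (n+1), (lam + (i:ℂ)))
          / ((lam + (k:ℂ)) * (Nat.factorial n : ℂ))))
      = (Nat.choose n k : ℂ) * a k / ((k:ℂ) + lam) := by
    intro k hk
    obtain ⟨hk1, hk2⟩ := Finset.mem_Icc.mp hk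
    have hkne : lam + (k:ℂ) ≠ 0 := hli k hk1 hk2
    have hkne' : (k:ℂ) + lam ≠ 0 := by rwa [add_comm]
    rw [← hprod]
    field_simp
    ring
  rw [Finset.sum_congr rfl hterm]
  have hz : ((Nat.factorial n : ℂ) / (lam * ∏ i ∈ Finset.Icc 1 n, (lam + (i:ℂ)))) *
      (((∏ i ∈ Finset.range (n+1), (lam + (i:ℂ))) / (lam * (Nat.factorial n : ℂ)) - 1) * a 0)
      = a 0 * ((1 / lam) * (1 - (Nat.factorial n : ℂ) / ∏ i ∈ Finset.Icc 1 n, (lam + (i:ℂ)))) := by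
    rw [← hprod]
    field_simp
  rw [hz]
  ring
end

section
/- For every complex number α and every natural number n ≥ 1: H_n(α) = H_n + Σ_{k=1}^n C(n,k) (α − 1)^k / k, where H_n(α) is the generalized harmonic number and H_n = H_n(1) is the n-th harmonic number. -/
open Finset

/-- The generalized harmonic number `H_n(α) = ∑_{k=1}^n α^k / k`. -/
noncomputable def genHarmonic (α : ℂ) (n : ℕ) : ℂ :=
  ∑ k ∈ Finset.Icc 1 n, α ^ k / (k : ℂ)

lemma auxA (x : ℂ) (m : ℕ) :
    ∑ k ∈ Icc 1 m, (m.choose k : ℂ) * x ^ k = (1 + x) ^ m - 1 := by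
  have h := add_pow x 1 m
  have hr : (Finset.range (m + 1)) = insert 0 (Icc 1 m) := by
    ext k
    simp [Finset.mem_range, Finset.mem_insert, Finset.mem_Icc]
    omega
  rw [hr, Finset.sum_insert (by simp)] at h
  simp only [one_pow, mul_one, pow_zero, one_mul] at h
  rw [add_comm 1 x, h, Nat.choose_zero_right, Nat.cast_one, add_sub_cancel_left]
  exact Finset.sum_congr rfl fun k _ => by ring

lemma auxB (x : ℂ) (n : ℕ) :
    ∑ k ∈ Icc 1 (n + 1), (n.choose (k - 1) : ℂ) * x ^ k / k =
      ((1 + x) ^ (n + 1) - 1) / (n + 1) := by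
  rw [← auxA x (n + 1), Finset.sum_div]
  apply Finset.sum_congr rfl
  intro k hk
  simp only [Finset.mem_Icc] at hk
  obtain ⟨hk1, hk2⟩ := hk
  have h1 : (k - 1) + 1 = k := by omega
  have hid : (n + 1) * n.choose (k - 1) = ((n + 1).choose k) * k := by
    have := Nat.add_one_mul_choose_eq n (k - 1)
    simp only [Nat.succ_eq_add_one, h1] at this
    exact this
  have hk0 : (k : ℂ) ≠ 0 := Nat.cast_ne_zero.mpr (by omega)
  have hn0 : ((n : ℂ) + 1) ≠ 0 := Nat.cast_add_one_ne_zero n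
  have hidc : ((n : ℂ) + 1) * (n.choose (k - 1) : ℂ) = ((n + 1).choose k : ℂ) * k := by
    exact_mod_cast congrArg (Nat.cast : ℕ → ℂ) hid
  field_simp
  linear_combination x ^ k * hidc

lemma auxC (x : ℂ) (n : ℕ) :
    ∑ k ∈ Icc 1 n, (n.choose k : ℂ) * x ^ k / k =
      ∑ j ∈ Icc 1 n, ((1 + x) ^ j - 1) / j := by
  induction n with
  | zero => simp
  | succ n ih =>
    have hsplit : ∑ k ∈ Icc 1 (n + 1), ((n + 1).choose k : ℂ) * x ^ k / k =
        (∑ k ∈ Icc 1 (n + 1), (n.choose k : ℂ) * x ^ k / k)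
          + ∑ k ∈ Icc 1 (n + 1), (n.choose (k - 1) : ℂ) * x ^ k / k := by
      rw [← Finset.sum_add_distrib]
      apply Finset.sum_congr rfl
      intro k hk
      simp only [Finset.mem_Icc] at hk
      have h1 : k = (k - 1) + 1 := by omega
      have : (n + 1).choose k = n.choose (k - 1) + n.choose k := by
        rw [h1, Nat.choose_succ_succ, Nat.succ_eq_add_one, ← h1]
      rw [this]
      push_cast
      ring
    have htrunc : ∑ k ∈ Icc 1 (n + 1), (n.choose k : ℂ) * x ^ k / k =
        ∑ k ∈ Icc 1 n, (n.choose k : ℂ) * x ^ k / k := by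
      rw [Finset.sum_Icc_succ_top (by omega : 1 ≤ n + 1)]
      simp [Nat.choose_succ_self]
    rw [hsplit, htrunc, ih, auxB,
      Finset.sum_Icc_succ_top (by omega : 1 ≤ n + 1)]
    push_cast
    ring

theorem stmt_5 (α : ℂ) (n : ℕ) (hn : 1 ≤ n) :
    genHarmonic α n =
      genHarmonic 1 n +
        ∑ k ∈ Finset.Icc 1 n, (Nat.choose n k : ℂ) * (α - 1) ^ k / (k : ℂ) := by
  unfold genHarmonic
  rw [auxC]
  have : (1 : ℂ) + (α - 1) = α := by ring
  rw [this, ← Finset.sum_add_distrib]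
  apply Finset.sum_congr rfl
  intro k hk
  simp only [Finset.mem_Icc] at hk
  have hk0 : (k : ℂ) ≠ 0 := Nat.cast_ne_zero.mpr (by omega)
  field_simp
  ring
end

section
/- Let a ∈ ℂ and let n, j be natural numbers with 1 ≤ j ≤ n. Then: Σ_{k=j}^n C(n,k) C(k,j) (−1)^k a^k / k = Σ_{t=j}^n C(t,j) (−a)^j (1 − a)^{t−j} / t. (This generalizes Gould's identity, which is the case a = 1.) -/
open Finset

lemma aux6 (a : ℂ) (n j : ℕ) (hj : 1 ≤ j) (hjm : j ≤ n + 1) :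
    ∑ k ∈ Finset.Icc j (n + 1),
        (Nat.choose n (k - 1) : ℂ) * (Nat.choose k j : ℂ) * (-1) ^ k * a ^ k / (k : ℂ) =
      (Nat.choose (n + 1) j : ℂ) * (-a) ^ j * (1 - a) ^ (n + 1 - j) / (n + 1 : ℂ) := by
  have h1 : ∀ k ∈ Finset.Icc j (n + 1),
      (Nat.choose n (k - 1) : ℂ) * (Nat.choose k j : ℂ) * (-1) ^ k * a ^ k / (k : ℂ)
        = (Nat.choose (n + 1) j : ℂ) * ((Nat.choose (n + 1 - j) (k - j) : ℂ)
            * (-1) ^ k * a ^ k) / (n + 1 : ℂ) := by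
    intro k hk
    simp only [mem_Icc] at hk
    have hk1 : 1 ≤ k := le_trans hj hk.1
    have hknat : (n + 1) * Nat.choose n (k - 1) = Nat.choose (n + 1) k * k := by
      have h2 : k - 1 + 1 = k := by omega
      calc (n + 1) * Nat.choose n (k - 1) = Nat.choose (n + 1) (k - 1 + 1) * (k - 1 + 1) :=
            Nat.add_one_mul_choose_eq n (k - 1)
        _ = Nat.choose (n + 1) k * k := by rw [h2]
    have hcm : Nat.choose (n + 1) k * Nat.choose k j
        = Nat.choose (n + 1) j * Nat.choose (n + 1 - j) (k - j) :=
      Nat.choose_mul hk.1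
    have hkne : (k : ℂ) ≠ 0 := Nat.cast_ne_zero.mpr (by omega)
    have hnne : ((n : ℂ) + 1) ≠ 0 := by
      exact_mod_cast (Nat.cast_ne_zero (R := ℂ)).mpr (Nat.succ_ne_zero n)
    rw [div_eq_div_iff hkne hnne]
    have hc : ((n : ℂ) + 1) * (Nat.choose n (k - 1) : ℂ) = (Nat.choose (n + 1) k : ℂ) * k := by
      exact_mod_cast congrArg (Nat.cast : ℕ → ℂ) hknat
    have hc2 : (Nat.choose (n + 1) k : ℂ) * Nat.choose k j
        = (Nat.choose (n + 1) j : ℂ) * Nat.choose (n + 1 - j) (k - j) := by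
      exact_mod_cast congrArg (Nat.cast : ℕ → ℂ) hcm
    calc (Nat.choose n (k - 1) : ℂ) * Nat.choose k j * (-1) ^ k * a ^ k * ((n:ℂ) + 1)
        = ((n:ℂ) + 1) * Nat.choose n (k-1) * (Nat.choose k j * ((-1)^k * a^k)) := by ring
      _ = (Nat.choose (n + 1) k : ℂ) * k * (Nat.choose k j * ((-1)^k * a^k)) := by rw [hc]
      _ = (Nat.choose (n+1) k : ℂ) * Nat.choose k j * ((-1)^k * a^k) * k := by ring
      _ = (Nat.choose (n+1) j : ℂ) * Nat.choose (n+1-j) (k-j) * ((-1)^k * a^k) * k := by rw [hc2]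
      _ = (Nat.choose (n + 1) j : ℂ) * ((Nat.choose (n + 1 - j) (k - j) : ℂ) * (-1) ^ k * a ^ k) * k := by ring
  rw [Finset.sum_congr rfl h1]
  rw [← Finset.sum_div, ← Finset.mul_sum, mul_assoc]
  congr 2
  -- goal: ∑ k ∈ Icc j (n+1), C(n+1-j, k-j) * (-1)^k * a^k = (-a)^j * (1-a)^(n+1-j)
  have : Finset.Icc j (n + 1) = Finset.Ico j (n + 2) := by
    exact (Finset.Ico_add_one_right_eq_Icc (a := j) (b := n + 1)).symm
  rw [this, Finset.sum_Ico_eq_sum_range]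
  have hr : n + 2 - j = (n + 1 - j) + 1 := by omega
  rw [hr]
  have hb := add_pow (-a) 1 (n + 1 - j)
  simp only [one_pow, mul_one] at hb
  have : (1 : ℂ) - a = -a + 1 := by ring
  rw [this, hb, Finset.mul_sum]
  apply Finset.sum_congr rfl
  intro i _
  have : j + i - j = i := by omega
  rw [this, pow_add, neg_pow a j, neg_pow a i, pow_add]
  ring

theorem stmt_6 (a : ℂ) (n j : ℕ) (hj : 1 ≤ j) (hjn : j ≤ n) :
    ∑ k ∈ Finset.Icc j n,
        (Nat.choose n k : ℂ) * (Nat.choose k j : ℂ) * (-1) ^ k * a ^ k / (k : ℂ) =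
      ∑ t ∈ Finset.Icc j n,
        (Nat.choose t j : ℂ) * (-a) ^ j * (1 - a) ^ (t - j) / (t : ℂ) := by
  induction n, hjn using Nat.le_induction with
  | base =>
    simp only [Finset.Icc_self, Finset.sum_singleton, Nat.choose_self, Nat.sub_self]
    rw [neg_pow a j]
    push_cast
    ring
  | succ n hn ih =>
    have hs : j ≤ n + 1 := le_trans hn (Nat.le_succ n)
    have hsplit : ∀ k ∈ Finset.Icc j (n + 1),
        (Nat.choose (n + 1) k : ℂ) * (Nat.choose k j : ℂ) * (-1) ^ k * a ^ k / (k : ℂ)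
          = (Nat.choose n k : ℂ) * (Nat.choose k j : ℂ) * (-1) ^ k * a ^ k / (k : ℂ)
            + (Nat.choose n (k - 1) : ℂ) * (Nat.choose k j : ℂ) * (-1) ^ k * a ^ k / (k : ℂ) := by
      intro k hk
      simp only [mem_Icc] at hk
      have hk1 : 1 ≤ k := le_trans hj hk.1
      obtain ⟨k', rfl⟩ : ∃ k', k = k' + 1 := ⟨k - 1, by omega⟩
      rw [Nat.choose_succ_succ' n k']
      push_cast
      ring
    rw [Finset.sum_congr rfl hsplit, Finset.sum_add_distrib, aux6 a n j hj hs,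
      Finset.sum_Icc_succ_top hs (f := fun k =>
        (Nat.choose n k : ℂ) * (Nat.choose k j : ℂ) * (-1) ^ k * a ^ k / (k : ℂ)),
      Finset.sum_Icc_succ_top hs (f := fun t =>
        (Nat.choose t j : ℂ) * (-a) ^ j * (1 - a) ^ (t - j) / (t : ℂ)),
      ih]
    simp [Nat.choose_succ_self]
end

section
/- Let α, μ, λ ∈ ℂ with μ + λ ≠ 0, and let n ≥ 1 be a natural number. Then: Σ_{k=0}^n C(n,k) μ^k λ^{n−k} H_k(α) = (μ + λ)^n · ( H_n( (λ + μα)/(μ + λ) ) − H_n( λ/(μ + λ) ) ). -/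
/-!
Both sides vanish at `n = 0` and satisfy the recurrence
`F (n + 1) = (μ + λ) F n + ((λ + μα)^(n+1) - λ^(n+1)) / (n + 1)`.
On the left this follows from Pascal's rule together with `H_{k+1} = H_k + α^(k+1)/(k+1)`,
the new terms summing by the integrated binomial theorem
`∑ C(n,k) x^(k+1) y^(n-k) / (k+1) = ((x + y)^(n+1) - y^(n+1)) / (n+1)`;
on the right it is immediate from the same recursion for `H_n`.
-/

open Finset

theorem sum_range_choose_succ_mul_pow {R : Type*} [CommSemiring R] (x y : R) (g : ℕ → R)
    (n : ℕ) :
    ∑ k ∈ range (n + 2), ((n + 1).choose k : R) * x ^ k * y ^ (n + 1 - k) * g k =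
      y * ∑ k ∈ range (n + 1), (n.choose k : R) * x ^ k * y ^ (n - k) * g k +
        x * ∑ k ∈ range (n + 1), (n.choose k : R) * x ^ k * y ^ (n - k) * g (k + 1) := by
  have pascal := sum_choose_succ_mul (fun i j ↦ x ^ i * y ^ j * g i) n
  simp only [← mul_assoc] at pascal
  rw [pascal, mul_sum, mul_sum]
  congr 1 <;> refine sum_congr rfl fun k hk ↦ ?_
  · rw [Nat.sub_add_comm (mem_range_succ_iff.mp hk), pow_succ]
    ring
  · ring

theorem sum_range_choose_mul_pow_div_succ {K : Type*} [Field K] [CharZero K] (x y : K) (n : ℕ) :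
    ∑ k ∈ range (n + 1), (n.choose k : K) * x ^ (k + 1) * y ^ (n - k) / (k + 1) =
      ((x + y) ^ (n + 1) - y ^ (n + 1)) / (n + 1) := by
  have absorb : ∀ k ∈ range (n + 1), (n.choose k : K) * x ^ (k + 1) * y ^ (n - k) / (k + 1) =
      x ^ (k + 1) * y ^ (n + 1 - (k + 1)) * ((n + 1).choose (k + 1) : K) / (n + 1) := by
    intro k _
    have h : ((n : K) + 1) * n.choose k = (n + 1).choose (k + 1) * (k + 1) := by
      exact_mod_cast Nat.add_one_mul_choose_eq n k
    rw [Nat.add_sub_add_right, div_eq_div_iff (Nat.cast_add_one_ne_zero k)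
      (Nat.cast_add_one_ne_zero n)]
    linear_combination x ^ (k + 1) * y ^ (n - k) * h
  rw [sum_congr rfl absorb, ← sum_div, add_pow, sum_range_succ' _ (n + 1)]
  simp

theorem genHarmonic_succ (α : ℂ) (n : ℕ) :
    genHarmonic α (n + 1) = genHarmonic α n + α ^ (n + 1) / (n + 1) := by
  rw [genHarmonic, sum_Icc_succ_top (Nat.le_add_left 1 n)]
  push_cast
  rfl

theorem sum_range_choose_mul_pow_genHarmonic_succ (α mu lam : ℂ) (n : ℕ) :
    ∑ k ∈ range (n + 2), ((n + 1).choose k : ℂ) * mu ^ k * lam ^ (n + 1 - k) * genHarmonic α k =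
      (mu + lam) *
          ∑ k ∈ range (n + 1), (n.choose k : ℂ) * mu ^ k * lam ^ (n - k) * genHarmonic α k +
        ((lam + mu * α) ^ (n + 1) - lam ^ (n + 1)) / (n + 1) := by
  have shift : mu * ∑ k ∈ range (n + 1),
        (n.choose k : ℂ) * mu ^ k * lam ^ (n - k) * (α ^ (k + 1) / (k + 1)) =
      ∑ k ∈ range (n + 1), (n.choose k : ℂ) * (mu * α) ^ (k + 1) * lam ^ (n - k) / (k + 1) := by
    rw [mul_sum]
    exact sum_congr rfl fun k _ ↦ by ring
  rw [sum_range_choose_succ_mul_pow, add_comm lam, ← sum_range_choose_mul_pow_div_succ, ← shift]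
  simp only [genHarmonic_succ, mul_add, sum_add_distrib]
  ring

theorem stmt_8_general (α mu lam : ℂ) (h : mu + lam ≠ 0) (n : ℕ) :
    ∑ k ∈ Finset.range (n + 1),
        (Nat.choose n k : ℂ) * mu ^ k * lam ^ (n - k) * genHarmonic α k =
      (mu + lam) ^ n *
        (genHarmonic ((lam + mu * α) / (mu + lam)) n - genHarmonic (lam / (mu + lam)) n) := by
  induction n with
  | zero => simp [genHarmonic]
  | succ n ih =>
    have rescale (a : ℂ) : (mu + lam) ^ (n + 1) * (a / (mu + lam)) ^ (n + 1) = a ^ (n + 1) := by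
      rw [div_pow, mul_div_cancel₀ _ (pow_ne_zero _ h)]
    rw [sum_range_choose_mul_pow_genHarmonic_succ, ih, genHarmonic_succ, genHarmonic_succ]
    linear_combination (rescale lam - rescale (lam + mu * α)) / ((n : ℂ) + 1)

theorem stmt_8 (α mu lam : ℂ) (h : mu + lam ≠ 0) (n : ℕ) (hn : 1 ≤ n) :
    ∑ k ∈ Finset.range (n + 1),
        (Nat.choose n k : ℂ) * mu ^ k * lam ^ (n - k) * genHarmonic α k =
      (mu + lam) ^ n *
        (genHarmonic ((lam + mu * α) / (mu + lam)) n - genHarmonic (lam / (mu + lam)) n) :=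
  stmt_8_general α mu lam h n
end

section
/- For every complex number α and every natural number n ≥ 1: Σ_{k=0}^n (−1)^k C(n,k) H_k(α) = ( (1 − α)^n − 1 ) / n. -/
/-! Pascal's rule turns the alternating binomial transform of `f` at `n + 1` into minus the
transform of its forward difference at `n`. Since `H_{k+1}(α) - H_k(α) = α^{k+1}/(k+1)`, the
transform of the harmonic numbers is that of `k ↦ α^{k+1}/(k+1)`, which is `∫₀^α (1-t)^n dt`. -/

open Finset

lemma sum_range_alternating_choose_succ_mul {R : Type*} [CommRing R] (f : ℕ → R) (n : ℕ) :
    ∑ k ∈ range (n + 2), (-1) ^ k * ((n + 1).choose k : R) * f k =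
      -∑ k ∈ range (n + 1), (-1) ^ k * (n.choose k : R) * (f (k + 1) - f k) := by
  have shifted : ∑ k ∈ range (n + 1), (-1) ^ k * (n.choose k : R) * f k =
      ∑ k ∈ range (n + 1), (-1) ^ (k + 1) * (n.choose (k + 1) : R) * f (k + 1) + f 0 := by
    have top : (-1) ^ (n + 1) * (n.choose (n + 1) : R) * f (n + 1) = 0 := by simp
    rw [← add_zero (∑ k ∈ range (n + 1), _), ← top, ← sum_range_succ, sum_range_succ']
    simp
  simp_rw [sum_range_succ' _ (n + 1), mul_sub, sum_sub_distrib, shifted, Nat.choose_succ_succ,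
    Nat.cast_add, mul_add, add_mul, sum_add_distrib, pow_succ]
  simp only [mul_neg, mul_one, neg_mul, sum_neg_distrib, pow_zero, Nat.choose_zero_right,
    Nat.cast_one, one_mul, neg_sub]
  ring

lemma cast_choose_div_succ {K : Type*} [Field K] [CharZero K] (n k : ℕ) :
    (n.choose k : K) / (k + 1) = (n + 1).choose (k + 1) / (n + 1) := by
  rw [div_eq_div_iff (Nat.cast_add_one_ne_zero k) (Nat.cast_add_one_ne_zero n)]
  exact_mod_cast (mul_comm _ _).trans (Nat.add_one_mul_choose_eq n k)

lemma sum_range_alternating_choose_mul_pow_succ_div {K : Type*} [Field K] [CharZero K]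
    (x : K) (n : ℕ) :
    ∑ k ∈ range (n + 1), (-1) ^ k * (n.choose k : K) * (x ^ (k + 1) / (k + 1)) =
      (1 - (1 - x) ^ (n + 1)) / (n + 1) := by
  have binomial : (1 - x) ^ (n + 1) =
      ∑ k ∈ range (n + 1), ((n + 1).choose (k + 1) : K) * (-x) ^ (k + 1) + 1 := by
    rw [sub_eq_neg_add, add_pow, sum_range_succ']
    simp [mul_comm]
  have term (k : ℕ) : (-1) ^ k * (n.choose k : K) * (x ^ (k + 1) / (k + 1)) * (n + 1) =
      -(((n + 1).choose (k + 1) : K) * (-x) ^ (k + 1)) := by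
    calc _ = (-1) ^ k * x ^ (k + 1) * ((n.choose k : K) / (k + 1) * (n + 1)) := by ring
      _ = _ := by
        rw [cast_choose_div_succ, div_mul_cancel₀ _ (Nat.cast_add_one_ne_zero n), neg_pow]
        ring
  rw [binomial, eq_div_iff (Nat.cast_add_one_ne_zero n), sum_mul]
  simp only [term, sum_neg_distrib]
  ring

lemma genHarmonic_succ_sub (α : ℂ) (k : ℕ) :
    genHarmonic α (k + 1) - genHarmonic α k = α ^ (k + 1) / (k + 1) := by
  rw [genHarmonic, genHarmonic, sum_Icc_succ_top (by omega), add_sub_cancel_left]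
  push_cast
  rfl

theorem stmt_9_general (α : ℂ) (n : ℕ) :
    ∑ k ∈ Finset.range (n + 1), (-1) ^ k * (Nat.choose n k : ℂ) * genHarmonic α k =
      ((1 - α) ^ n - 1) / (n : ℂ) := by
  cases n with
  | zero => simp [genHarmonic]
  | succ n =>
    rw [sum_range_alternating_choose_succ_mul]
    simp only [genHarmonic_succ_sub, sum_range_alternating_choose_mul_pow_succ_div]
    push_cast
    ring

theorem stmt_9 (α : ℂ) (n : ℕ) (hn : 1 ≤ n) :
    ∑ k ∈ Finset.range (n + 1), (-1) ^ k * (Nat.choose n k : ℂ) * genHarmonic α k =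
      ((1 - α) ^ n - 1) / (n : ℂ) :=
  stmt_9_general α n
end

section
/- For every natural number n ≥ 1: Σ_{k=0}^n C(n,k) H_k^− = 2^n · H_n(1/2), where H_k^− = Σ_{j=1}^k (−1)^{j−1}/j is the k-th skew-harmonic number. -/
open Finset

/-- The skew-harmonic number `H_n^− = ∑_{k=1}^n (−1)^{k−1} / k`. -/
noncomputable def skewHarmonic (n : ℕ) : ℂ :=
  ∑ k ∈ Finset.Icc 1 n, (-1) ^ (k - 1) / (k : ℂ)

lemma alt_shift (n : ℕ) :
    ∑ j ∈ range (n + 1), (-1 : ℂ) ^ j * ((n+1).choose (j+1) : ℂ) = 1 := by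
  have h0 : (∑ i ∈ range (n + 2), (-1 : ℤ) ^ i * ((n+1).choose i : ℤ)) = 0 :=
    Int.alternating_sum_range_choose_of_ne (by omega)
  have hC : (∑ i ∈ range (n + 2), (-1 : ℂ) ^ i * ((n+1).choose i : ℂ)) = 0 := by
    have := congrArg (Int.cast : ℤ → ℂ) h0
    push_cast at this
    exact this
  rw [Finset.sum_range_succ'] at hC
  simp at hC
  have : ∑ j ∈ range (n + 1), (-1 : ℂ) ^ (j+1) * ((n+1).choose (j+1) : ℂ) = -1 := by
    linear_combination hC
  calc ∑ j ∈ range (n + 1), (-1 : ℂ) ^ j * ((n+1).choose (j+1) : ℂ)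
      = -∑ j ∈ range (n + 1), (-1 : ℂ) ^ (j+1) * ((n+1).choose (j+1) : ℂ) := by
        rw [← Finset.sum_neg_distrib]; apply Finset.sum_congr rfl; intro j _; ring
    _ = 1 := by rw [this]; ring

lemma key (n : ℕ) : ∑ j ∈ range (n+1), (n.choose j : ℂ) * ((-1)^j / ((j:ℂ)+1)) = 1/((n:ℂ)+1) := by
  have hterm : ∀ j, (n.choose j : ℂ) * ((-1)^j / ((j:ℂ)+1))
      = (-1 : ℂ)^j * ((n+1).choose (j+1) : ℂ) * (1/((n:ℂ)+1)) := by
    intro j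
    have h := Nat.add_one_mul_choose_eq n j
    have h' : ((n:ℂ)+1) * (n.choose j : ℂ) = ((n+1).choose (j+1) : ℂ) * ((j:ℂ)+1) := by
      exact_mod_cast congrArg (Nat.cast : ℕ → ℂ) h
    have hj : ((j:ℂ)+1) ≠ 0 := Nat.cast_add_one_ne_zero j
    have hn : ((n:ℂ)+1) ≠ 0 := Nat.cast_add_one_ne_zero n
    field_simp
    linear_combination h'
  rw [Finset.sum_congr rfl (fun j _ => hterm j), ← Finset.sum_mul, alt_shift, one_mul]

lemma skew_succ (k : ℕ) : skewHarmonic (k+1) = skewHarmonic k + (-1)^k/((k:ℂ)+1) := by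
  unfold skewHarmonic
  rw [Finset.sum_Icc_succ_top (by omega)]
  push_cast
  simp

lemma skew_zero : skewHarmonic 0 = 0 := by simp [skewHarmonic]

theorem stmt_10 (n : ℕ) (hn : 1 ≤ n) :
    ∑ k ∈ Finset.range (n + 1), (Nat.choose n k : ℂ) * skewHarmonic k =
      2 ^ n * genHarmonic (1 / 2) n := by
  induction n, hn using Nat.le_induction with
  | base => norm_num [Finset.sum_range_succ, skewHarmonic, genHarmonic]
  | succ n hn ih =>
    have hshift : ∑ k ∈ range (n+1), (n.choose (k+1) : ℂ) * skewHarmonic (k+1)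
        = ∑ k ∈ range (n+1), (n.choose k : ℂ) * skewHarmonic k := by
      have h1 := Finset.sum_range_succ' (fun m => (n.choose m : ℂ) * skewHarmonic m) (n+1)
      rw [Finset.sum_range_succ] at h1
      rw [Nat.choose_succ_self, skew_zero] at h1
      push_cast at h1
      simpa using h1.symm
    have hL : ∑ k ∈ range (n+2), ((n+1).choose k : ℂ) * skewHarmonic k
        = 2 * (∑ k ∈ range (n+1), (n.choose k : ℂ) * skewHarmonic k) + 1/((n:ℂ)+1) := by
      rw [Finset.sum_range_succ', skew_zero, mul_zero, add_zero]
      have hc : ∀ k ∈ range (n+1), ((n+1).choose (k+1) : ℂ) * skewHarmonic (k+1)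
          = (n.choose k : ℂ) * skewHarmonic k + (n.choose (k+1):ℂ) * skewHarmonic (k+1)
            + (n.choose k : ℂ) * ((-1)^k / ((k:ℂ)+1)) := by
        intro k _
        rw [Nat.choose_succ_succ, skew_succ]
        push_cast
        ring
      rw [Finset.sum_congr rfl hc, Finset.sum_add_distrib, Finset.sum_add_distrib, hshift, key]
      ring
    have hR : (2:ℂ)^(n+1) * genHarmonic (1/2) (n+1)
        = 2 * ((2:ℂ)^n * genHarmonic (1/2) n) + 1/((n:ℂ)+1) := by
      unfold genHarmonic
      rw [Finset.sum_Icc_succ_top (by omega), mul_add]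
      push_cast
      have h2 : ((2:ℂ))^(n+1) * (1/2:ℂ)^(n+1) = 1 := by rw [← mul_pow]; norm_num
      linear_combination ((n:ℂ)+1)⁻¹ * h2
    rw [show n + 1 + 1 = n + 2 from rfl, hL, hR, ih]
end

section
/- For all natural numbers n, k, p (with the convention 0^0 = 1), the following identity of integers holds: C(n,k) · k^p = Σ_{l=0}^p Σ_{j=0}^p (−1)^l C(n−l, k) C(n,l) C(n−l, j−l) · j! · S(p,j), where S(p,j) denotes the Stirling number of the second kind. (Terms with l > n vanish because C(n,l) = 0.) -/
open Finset

/-- Stirling numbers of the second kind: `stirling2 p j` is the number of partitions of a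
`p`-element set into `j` nonempty blocks. -/
def stirling2 : ℕ → ℕ → ℕ
  | 0, 0 => 1
  | 0, _ + 1 => 0
  | _ + 1, 0 => 0
  | p + 1, j + 1 => (j + 1) * stirling2 p (j + 1) + stirling2 p j

lemma stirling2_eq_zero : ∀ p j : ℕ, p < j → stirling2 p j = 0
  | 0, _ + 1, _ => rfl
  | p + 1, j + 1, h => by
    have h1 : p < j + 1 := by omega
    have h2 : p < j := by omega
    simp [stirling2, stirling2_eq_zero p (j+1) h1, stirling2_eq_zero p j h2]

lemma mul_choose (k j : ℕ) : k * k.choose j = (j + 1) * k.choose (j + 1) + j * k.choose j := by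
  rcases le_or_gt j k with h | h
  · have e : (j + 1) * k.choose (j + 1) + j * k.choose j = (k - j) * k.choose j + j * k.choose j := by
      rw [mul_comm (j+1), Nat.choose_succ_right_eq k j, mul_comm]
    rw [e, ← Nat.add_mul, Nat.sub_add_cancel h]
  · rw [Nat.choose_eq_zero_of_lt h, Nat.choose_eq_zero_of_lt (by omega)]
    ring

lemma stirling_pow (k : ℕ) : ∀ p : ℕ, k ^ p = ∑ j ∈ range (p + 1), stirling2 p j * j.factorial * k.choose j := by
  intro p
  induction p with
  | zero => simp [stirling2]
  | succ p ih =>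
    rw [pow_succ, ih, Finset.sum_mul]
    have step : ∀ j, stirling2 p j * j.factorial * k.choose j * k
        = stirling2 p j * (j+1).factorial * k.choose (j+1) + j * (stirling2 p j * j.factorial * k.choose j) := by
      intro j
      rw [mul_comm _ k, ← mul_assoc, mul_comm k, mul_assoc, mul_choose k j, Nat.factorial_succ]
      ring
    rw [Finset.sum_congr rfl fun j _ => step j, Finset.sum_add_distrib]
    -- RHS: peel j = 0
    rw [Finset.sum_range_succ' (fun j => stirling2 (p+1) j * j.factorial * k.choose j) (p+1)]
    simp only [stirling2, Nat.choose_zero_right, Nat.factorial_zero]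
    have : ∀ j, ((j + 1) * stirling2 p (j + 1) + stirling2 p j) * (j+1).factorial * k.choose (j+1)
        = (j+1) * (stirling2 p (j+1) * (j+1).factorial * k.choose (j+1)) + stirling2 p j * (j+1).factorial * k.choose (j+1) := by
      intro j; ring
    rw [Finset.sum_congr rfl fun j _ => this j, Finset.sum_add_distrib]
    have e1 : ∑ j ∈ range (p+1), (j+1) * (stirling2 p (j+1) * (j+1).factorial * k.choose (j+1))
        = ∑ j ∈ range (p+1), j * (stirling2 p j * j.factorial * k.choose j) := by
      rw [Finset.sum_range_succ, stirling2_eq_zero p (p+1) (by omega),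
        Finset.sum_range_succ' (fun j => j * (stirling2 p j * j.factorial * k.choose j)) p]
      simp
    omega

lemma findiff (k : ℕ) : ∀ j n : ℕ, j ≤ n →
    ∑ l ∈ range (j + 1), (-1 : ℤ) ^ l * (j.choose l) * ((n - l).choose k)
      = if j ≤ k then ((n - j).choose (k - j) : ℤ) else 0 := by
  intro j
  induction j with
  | zero => intro n _; simp
  | succ j ih =>
    intro n hn
    have key : ∑ l ∈ range (j + 2), (-1 : ℤ) ^ l * ((j+1).choose l) * ((n - l).choose k)
        = (∑ l ∈ range (j + 1), (-1 : ℤ) ^ l * (j.choose l) * ((n - l).choose k))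
          - ∑ l ∈ range (j + 1), (-1 : ℤ) ^ l * (j.choose l) * ((n - 1 - l).choose k) := by
      rw [Finset.sum_range_succ' (fun l => (-1 : ℤ) ^ l * ((j+1).choose l) * ((n - l).choose k)) (j+1)]
      have split : ∀ l, (-1 : ℤ) ^ (l+1) * ((j+1).choose (l+1)) * ((n - (l+1)).choose k)
          = -((-1 : ℤ) ^ l * (j.choose l) * ((n - 1 - l).choose k))
            + (-1 : ℤ) ^ (l+1) * (j.choose (l+1)) * ((n - (l+1)).choose k) := by
        intro l
        have h1 : n - (l + 1) = n - 1 - l := by omega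
        rw [Nat.choose_succ_succ, h1]
        push_cast
        ring
      rw [Finset.sum_congr rfl fun l _ => split l, Finset.sum_add_distrib, Finset.sum_neg_distrib]
      have e2 : ∑ l ∈ range (j + 1), (-1 : ℤ) ^ (l+1) * (j.choose (l+1)) * ((n - (l+1)).choose k)
            + (-1 : ℤ) ^ 0 * (j.choose 0) * ((n - 0).choose k)
          = ∑ l ∈ range (j + 1), (-1 : ℤ) ^ l * (j.choose l) * ((n - l).choose k) := by
        rw [← Finset.sum_range_succ' (fun l => (-1 : ℤ) ^ l * (j.choose l) * ((n - l).choose k)) (j+1)]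
        rw [Finset.sum_range_succ]
        simp [Nat.choose_eq_zero_of_lt (show j < j + 1 by omega)]
      have c0 : ((-1 : ℤ) ^ 0 * (((j:ℕ)+1).choose 0) * ((n - 0).choose k)) = (-1 : ℤ) ^ 0 * ((j.choose 0 : ℕ)) * ((n - 0).choose k) := by
        simp
      rw [c0, add_assoc, e2]
      ring
    rw [key, ih n (by omega), ih (n-1) (by omega)]
    rcases le_or_gt (j + 1) k with hk | hk
    · rw [if_pos (by omega), if_pos (by omega), if_pos hk]
      obtain ⟨m, hm⟩ : ∃ m, n - 1 - j = m := ⟨_, rfl⟩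
      obtain ⟨t, ht⟩ : ∃ t, k - 1 - j = t := ⟨_, rfl⟩
      have h1 : n - j = m + 1 := by omega
      have h2 : k - j = t + 1 := by omega
      have h3 : n - (j+1) = m := by omega
      have h4 : k - (j+1) = t := by omega
      rw [h1, h2, h3, h4, hm, Nat.choose_succ_succ]
      push_cast; ring
    · rcases le_or_gt j k with hjk | hjk
      · have : j = k := by omega
        subst this
        rw [if_pos le_rfl, if_pos le_rfl, if_neg (by omega)]
        simp [Nat.sub_self]
      · rw [if_neg (by omega), if_neg (by omega), if_neg (by omega)]
        ring

lemma trinom1 (n j l : ℕ) (h : l ≤ j) :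
    n.choose l * (n - l).choose (j - l) = n.choose j * j.choose l := by
  rcases le_or_gt j n with hjn | hjn
  · exact (Nat.choose_mul (n := n) h).symm
  · rcases le_or_gt l n with hln | hln
    · rw [Nat.choose_eq_zero_of_lt (show n - l < j - l by omega),
        Nat.choose_eq_zero_of_lt hjn]
      ring
    · rw [Nat.choose_eq_zero_of_lt hln, Nat.choose_eq_zero_of_lt hjn]
      ring

lemma trinom2 (n j k : ℕ) (h : j ≤ k) (hjn : j ≤ n) :
    n.choose j * (n - j).choose (k - j) = n.choose k * k.choose j := by
  rcases le_or_gt k n with hkn | hkn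
  · exact (Nat.choose_mul (n := n) h).symm
  · rw [Nat.choose_eq_zero_of_lt (show n - j < k - j by omega),
      Nat.choose_eq_zero_of_lt hkn]
    ring

lemma innerSumAux (n k p j : ℕ) (hj : j ≤ p) :
    ∑ l ∈ range (p + 1), (-1 : ℤ) ^ l * ((n - l).choose k) * (n.choose l) *
        (if l ≤ j then ((n - l).choose (j - l) : ℤ) else 0)
      = (n.choose k : ℤ) * (k.choose j : ℤ) := by
  have hsub : range (j + 1) ⊆ range (p + 1) := by
    apply Finset.range_subset_range.mpr; omega
  rw [← Finset.sum_subset hsub (by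
    intro x _ hx
    rw [Finset.mem_range, not_lt] at hx
    rw [if_neg (by omega), mul_zero])]
  have step : ∀ l ∈ range (j + 1),
      (-1 : ℤ) ^ l * ((n - l).choose k) * (n.choose l) *
        (if l ≤ j then ((n - l).choose (j - l) : ℤ) else 0)
      = (n.choose j : ℤ) * ((-1 : ℤ) ^ l * (j.choose l) * ((n - l).choose k)) := by
    intro l hl
    rw [Finset.mem_range] at hl
    have hlj : l ≤ j := by omega
    rw [if_pos hlj]
    have := trinom1 n j l hlj
    have h2 : ((n.choose l : ℤ)) * ((n - l).choose (j - l) : ℤ) = (n.choose j : ℤ) * (j.choose l : ℤ) := by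
      exact_mod_cast congrArg (Nat.cast : ℕ → ℤ) this
    linear_combination ((-1 : ℤ) ^ l * ((n - l).choose k : ℤ)) * h2
  rw [Finset.sum_congr rfl step, ← Finset.mul_sum]
  rcases le_or_gt j n with hjn | hjn
  · rw [findiff k j n hjn]
    rcases le_or_gt j k with hjk | hjk
    · rw [if_pos hjk]
      exact_mod_cast congrArg (Nat.cast : ℕ → ℤ) (trinom2 n j k hjk hjn)
    · rw [if_neg (by omega), Nat.choose_eq_zero_of_lt hjk]
      push_cast; ring
  · rw [Nat.choose_eq_zero_of_lt hjn]
    rcases le_or_gt k n with hkn | hkn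
    · rw [Nat.choose_eq_zero_of_lt (show k < j by omega)]
      push_cast; ring
    · rw [Nat.choose_eq_zero_of_lt hkn]
      push_cast; ring

theorem stmt_15 (n k p : ℕ) :
    (Nat.choose n k : ℤ) * (k : ℤ) ^ p =
      ∑ l ∈ Finset.range (p + 1), ∑ j ∈ Finset.range (p + 1),
        (-1) ^ l * (Nat.choose (n - l) k : ℤ) * (Nat.choose n l : ℤ) *
          (if l ≤ j then (Nat.choose (n - l) (j - l) : ℤ) else 0) *
          (Nat.factorial j : ℤ) * (stirling2 p j : ℤ) := by
  rw [Finset.sum_comm]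
  have step1 : ∀ j ∈ range (p + 1),
      (∑ l ∈ range (p + 1),
        (-1 : ℤ) ^ l * ((n - l).choose k : ℤ) * ((n.choose l) : ℤ) *
          (if l ≤ j then ((n - l).choose (j - l) : ℤ) else 0) *
          (j.factorial : ℤ) * (stirling2 p j : ℤ))
      = (n.choose k : ℤ) * ((stirling2 p j : ℤ) * (j.factorial : ℤ) * (k.choose j : ℤ)) := by
    intro j hj
    rw [Finset.mem_range] at hj
    have : ∀ l, (-1 : ℤ) ^ l * ((n - l).choose k : ℤ) * ((n.choose l) : ℤ) *
          (if l ≤ j then ((n - l).choose (j - l) : ℤ) else 0) *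
          (j.factorial : ℤ) * (stirling2 p j : ℤ)
        = ((-1 : ℤ) ^ l * ((n - l).choose k : ℤ) * ((n.choose l) : ℤ) *
          (if l ≤ j then ((n - l).choose (j - l) : ℤ) else 0)) *
          ((j.factorial : ℤ) * (stirling2 p j : ℤ)) := by
      intro l; ring
    rw [Finset.sum_congr rfl fun l _ => this l, ← Finset.sum_mul,
      innerSumAux n k p j (by omega)]
    ring
  rw [Finset.sum_congr rfl step1, ← Finset.mul_sum]
  congr 1
  have := congrArg (Nat.cast : ℕ → ℤ) (stirling_pow k p)
  push_cast at this
  rw [this]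
end

section
/- For all natural numbers n ≥ 1 and p ≥ 0 (with the convention 0^0 = 1): Σ_{k=0}^n (−1)^k C(n,k) k^p H_k = (−1)^n · n! · S(p,n) · H_n − Σ_{k=0}^{n−1} (−1)^k · k! · S(p,k) / (n − k), where H_k = Σ_{j=1}^k 1/j is the k-th harmonic number and S(p,k) denotes the Stirling number of the second kind. -/
open Finset

/-- The harmonic number `H_n = ∑_{k=1}^n 1 / k`. -/
noncomputable def harmonicC (n : ℕ) : ℂ :=
  ∑ k ∈ Finset.Icc 1 n, (1 : ℂ) / (k : ℂ)

lemma harmonicC_zero : harmonicC 0 = 0 := by simp [harmonicC]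

lemma harmonicC_succ (n : ℕ) : harmonicC (n+1) = harmonicC n + 1/((n:ℂ)+1) := by
  unfold harmonicC
  rw [Finset.sum_Icc_succ_top (by omega : 1 ≤ n+1)]
  push_cast; ring

lemma A_lem (n : ℕ) : ∀ m, ∑ k ∈ range (n+1), (-1:ℂ)^k * (n.choose k : ℂ) * (k.choose m : ℂ)
    = if m = n then (-1)^n else 0 := by
  induction n with
  | zero =>
    intro m
    rcases m with _ | m <;> simp
  | succ n ih =>
    intro m
    have hshift : ∑ i ∈ range (n+1), (-1:ℂ)^(i+1) * (n.choose (i+1) : ℂ) * ((i+1).choose m : ℂ)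
        = (if m = n then (-1:ℂ)^n else 0) - ((0:ℕ).choose m : ℂ) := by
      have h1 := Finset.sum_range_succ' (fun k => (-1:ℂ)^k * (n.choose k : ℂ) * (k.choose m : ℂ)) (n+1)
      have h2 := Finset.sum_range_succ (fun k => (-1:ℂ)^k * (n.choose k : ℂ) * (k.choose m : ℂ)) (n+1)
      simp only [Nat.choose_succ_self, Nat.cast_zero, mul_zero, zero_mul, add_zero,
        pow_zero, Nat.choose_zero_right, Nat.cast_one, one_mul] at h1 h2
      rw [h2, ih m] at h1
      linear_combination -h1
    rw [Finset.sum_range_succ']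
    have hsplit : ∀ i ∈ range (n+1), (-1:ℂ)^(i+1) * ((n+1).choose (i+1) : ℂ) * ((i+1).choose m : ℂ)
        = (-1:ℂ)^(i+1) * (n.choose i : ℂ) * ((i+1).choose m : ℂ)
          + (-1:ℂ)^(i+1) * (n.choose (i+1) : ℂ) * ((i+1).choose m : ℂ) := by
      intro i _
      rw [Nat.choose_succ_succ]
      push_cast; ring
    rw [Finset.sum_congr rfl hsplit, Finset.sum_add_distrib, hshift]
    rcases m with _ | m
    · have : ∀ i ∈ range (n+1), (-1:ℂ)^(i+1) * (n.choose i : ℂ) * ((i+1).choose 0 : ℂ)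
          = -((-1:ℂ)^i * (n.choose i : ℂ) * (i.choose 0 : ℂ)) := by
        intro i _; simp; ring
      rw [Finset.sum_congr rfl this, Finset.sum_neg_distrib, ih 0]
      simp only [Nat.choose_zero_right, Nat.cast_one]
      have : (0 = n + 1) = False := by simp
      simp only [Nat.zero_eq, this, if_false]
      ring
    · have : ∀ i ∈ range (n+1), (-1:ℂ)^(i+1) * (n.choose i : ℂ) * ((i+1).choose (m+1) : ℂ)
          = -((-1:ℂ)^i * (n.choose i : ℂ) * (i.choose m : ℂ))
            - ((-1:ℂ)^i * (n.choose i : ℂ) * (i.choose (m+1) : ℂ)) := by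
        intro i _
        rw [Nat.choose_succ_succ]
        push_cast; ring
      rw [Finset.sum_congr rfl this, Finset.sum_sub_distrib, Finset.sum_neg_distrib, ih m, ih (m+1)]
      rcases eq_or_ne m n with h | h
      · simp [h, pow_succ]
      · have h2 : m + 1 ≠ n + 1 := by omega
        simp [h, h2]

lemma shift_lem (N m : ℕ) :
    ∑ i ∈ range N, (-1:ℂ)^(i+1) * (N.choose (i+1) : ℂ) * ((i+1).choose m : ℂ)
    = (if m = N then (-1:ℂ)^N else 0) - ((0:ℕ).choose m : ℂ) := by
  have h1 := Finset.sum_range_succ' (fun k => (-1:ℂ)^k * (N.choose k : ℂ) * (k.choose m : ℂ)) N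
  rw [A_lem N m] at h1
  simp only [pow_zero, Nat.choose_zero_right, Nat.cast_one, one_mul] at h1
  linear_combination -h1

lemma E_lem (N : ℕ) : ∀ m, ∑ i ∈ range N, (-1:ℂ)^(i+1) * (N.choose (i+1) : ℂ) * (i.choose m : ℂ)
    = if m + 1 ≤ N then -(-1:ℂ)^m else 0 := by
  intro m
  induction m with
  | zero =>
    have h := shift_lem N 0
    simp only [Nat.choose_zero_right, Nat.cast_one] at h ⊢
    rw [h]
    rcases Nat.eq_zero_or_pos N with h0 | h0
    · subst h0; simp
    · rw [if_neg (by omega : ¬ (0 = N)), if_pos (by omega : 0 + 1 ≤ N)]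
      simp
  | succ m ih =>
    have hrel : ∑ i ∈ range N, (-1:ℂ)^(i+1) * (N.choose (i+1) : ℂ) * ((i+1).choose (m+1) : ℂ)
        = (∑ i ∈ range N, (-1:ℂ)^(i+1) * (N.choose (i+1) : ℂ) * (i.choose m : ℂ))
          + ∑ i ∈ range N, (-1:ℂ)^(i+1) * (N.choose (i+1) : ℂ) * (i.choose (m+1) : ℂ) := by
      rw [← Finset.sum_add_distrib]
      refine Finset.sum_congr rfl fun i _ => ?_
      rw [Nat.choose_succ_succ]
      push_cast; ring
    have hs := shift_lem N (m+1)
    rw [hrel, ih] at hs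
    have hz : ((0:ℕ).choose (m+1) : ℂ) = 0 := by simp
    rw [hz, sub_zero] at hs
    rcases lt_trichotomy (m+1) N with h | h | h
    · rw [if_neg (by omega : ¬(m+1 = N)), if_pos (by omega : m+1 ≤ N)] at hs
      rw [if_pos (by omega : m+1+1 ≤ N)]
      linear_combination hs
    · rw [if_pos h, if_pos (by omega : m+1 ≤ N)] at hs
      rw [if_neg (by omega : ¬(m+1+1 ≤ N))]
      subst h
      linear_combination hs
    · rw [if_neg (by omega : ¬(m+1 = N)), if_neg (by omega : ¬(m+1 ≤ N))] at hs
      rw [if_neg (by omega : ¬(m+1+1 ≤ N))]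
      linear_combination hs

lemma G_lem (n m : ℕ) : ∑ i ∈ range (n+1), (-1:ℂ)^i * (n.choose i : ℂ) * (i.choose m : ℂ) / ((i:ℂ)+1)
    = if m ≤ n then (-1:ℂ)^m/((n:ℂ)+1) else 0 := by
  have hn : ((n:ℂ)+1) ≠ 0 := Nat.cast_add_one_ne_zero n
  have key : ∀ i ∈ range (n+1), (-1:ℂ)^i * (n.choose i : ℂ) * (i.choose m : ℂ) / ((i:ℂ)+1)
      = (-(1/((n:ℂ)+1))) * ((-1:ℂ)^(i+1) * ((n+1).choose (i+1) : ℂ) * (i.choose m : ℂ)) := by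
    intro i _
    have hc := Nat.add_one_mul_choose_eq n i
    have hcc : ((n:ℂ)+1) * (n.choose i : ℂ) = ((n+1).choose (i+1) : ℂ) * ((i:ℂ)+1) := by
      exact_mod_cast congrArg (Nat.cast : ℕ → ℂ) hc
    have hi : ((i:ℂ)+1) ≠ 0 := Nat.cast_add_one_ne_zero i
    field_simp
    linear_combination ((-1:ℂ)^i * (i.choose m : ℂ)) * hcc
  rw [Finset.sum_congr rfl key, ← Finset.mul_sum, E_lem (n+1) m]
  rcases le_or_gt m n with h | h
  · rw [if_pos (by omega : m+1 ≤ n+1), if_pos h]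
    field_simp
  · rw [if_neg (by omega : ¬(m+1 ≤ n+1)), if_neg (by omega : ¬(m ≤ n))]
    simp

lemma F_lem (n : ℕ) : ∀ m, ∑ k ∈ range (n+1), (-1:ℂ)^k * (n.choose k : ℂ) * (k.choose m : ℂ) * harmonicC k
    = if m = n then (-1:ℂ)^n * harmonicC n else if m < n then -(-1:ℂ)^m/((n-m:ℕ):ℂ) else 0 := by
  induction n with
  | zero =>
    intro m
    have hz : ∑ k ∈ range (0+1), (-1:ℂ)^k * (Nat.choose 0 k : ℂ) * (k.choose m : ℂ) * harmonicC k = 0 := by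
      rw [Finset.sum_range_succ, Finset.sum_range_zero, harmonicC_zero]; ring
    rw [hz]
    rcases m with _ | m
    · rw [if_pos rfl, harmonicC_zero]; ring
    · rw [if_neg (by omega : ¬ (m+1 = 0)), if_neg (by omega : ¬ (m+1 < 0))]
  | succ n ih =>
    intro m
    -- peel k = 0
    rw [Finset.sum_range_succ']
    simp only [harmonicC_zero, mul_zero, add_zero]
    -- Pascal split
    have hsplit : ∀ i ∈ range (n+1),
        (-1:ℂ)^(i+1) * ((n+1).choose (i+1) : ℂ) * ((i+1).choose m : ℂ) * harmonicC (i+1)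
        = (-1:ℂ)^(i+1) * (n.choose i : ℂ) * ((i+1).choose m : ℂ) * harmonicC (i+1)
          + (-1:ℂ)^(i+1) * (n.choose (i+1) : ℂ) * ((i+1).choose m : ℂ) * harmonicC (i+1) := by
      intro i _
      rw [Nat.choose_succ_succ]
      push_cast; ring
    rw [Finset.sum_congr rfl hsplit, Finset.sum_add_distrib]
    -- second part equals F(n,m)
    have hP2 : ∑ i ∈ range (n+1), (-1:ℂ)^(i+1) * (n.choose (i+1) : ℂ) * ((i+1).choose m : ℂ) * harmonicC (i+1)
        = if m = n then (-1:ℂ)^n * harmonicC n else if m < n then -(-1:ℂ)^m/((n-m:ℕ):ℂ) else 0 := by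
      have h1 := Finset.sum_range_succ' (fun k => (-1:ℂ)^k * (n.choose k : ℂ) * (k.choose m : ℂ) * harmonicC k) (n+1)
      have h2 := Finset.sum_range_succ (fun k => (-1:ℂ)^k * (n.choose k : ℂ) * (k.choose m : ℂ) * harmonicC k) (n+1)
      simp only [harmonicC_zero, mul_zero, add_zero, Nat.choose_succ_self, Nat.cast_zero,
        zero_mul, mul_zero] at h1 h2
      rw [h2, ih m] at h1
      rw [← h1]
    rw [hP2]
    -- first part: expand H_{i+1} = H_i + 1/(i+1)
    have hH : ∀ i ∈ range (n+1),
        (-1:ℂ)^(i+1) * (n.choose i : ℂ) * ((i+1).choose m : ℂ) * harmonicC (i+1)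
        = (-1:ℂ)^(i+1) * (n.choose i : ℂ) * ((i+1).choose m : ℂ) * harmonicC i
          + (-1:ℂ)^(i+1) * (n.choose i : ℂ) * ((i+1).choose m : ℂ) / ((i:ℂ)+1) := by
      intro i _
      rw [harmonicC_succ]
      ring
    rw [Finset.sum_congr rfl hH, Finset.sum_add_distrib]
    rcases m with _ | m
    · -- m = 0
      have e1 : ∑ i ∈ range (n+1), (-1:ℂ)^(i+1) * (n.choose i : ℂ) * ((i+1).choose 0 : ℂ) * harmonicC i
          = -∑ k ∈ range (n+1), (-1:ℂ)^k * (n.choose k : ℂ) * (k.choose 0 : ℂ) * harmonicC k := by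
        rw [← Finset.sum_neg_distrib]
        refine Finset.sum_congr rfl fun i _ => ?_
        simp only [Nat.choose_zero_right, Nat.cast_one]
        ring
      have e2 : ∑ i ∈ range (n+1), (-1:ℂ)^(i+1) * (n.choose i : ℂ) * ((i+1).choose 0 : ℂ) / ((i:ℂ)+1)
          = -∑ i ∈ range (n+1), (-1:ℂ)^i * (n.choose i : ℂ) * (i.choose 0 : ℂ) / ((i:ℂ)+1) := by
        rw [← Finset.sum_neg_distrib]
        refine Finset.sum_congr rfl fun i _ => ?_
        simp only [Nat.choose_zero_right, Nat.cast_one]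
        ring
      rw [e1, e2, ih 0, G_lem n 0]
      rw [if_pos (by omega : 0 ≤ n)]
      rw [if_neg (by omega : ¬ (0 = n+1)), if_pos (by omega : 0 < n+1)]
      have : ((n+1-0:ℕ):ℂ) = (n:ℂ)+1 := by push_cast; ring
      rw [this]
      ring
    · -- m = m'+1
      have e1 : ∑ i ∈ range (n+1), (-1:ℂ)^(i+1) * (n.choose i : ℂ) * ((i+1).choose (m+1) : ℂ) * harmonicC i
          = -(∑ k ∈ range (n+1), (-1:ℂ)^k * (n.choose k : ℂ) * (k.choose m : ℂ) * harmonicC k)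
            - ∑ k ∈ range (n+1), (-1:ℂ)^k * (n.choose k : ℂ) * (k.choose (m+1) : ℂ) * harmonicC k := by
        rw [← Finset.sum_neg_distrib, ← Finset.sum_sub_distrib]
        refine Finset.sum_congr rfl fun i _ => ?_
        rw [Nat.choose_succ_succ]
        push_cast; ring
      have e2 : ∑ i ∈ range (n+1), (-1:ℂ)^(i+1) * (n.choose i : ℂ) * ((i+1).choose (m+1) : ℂ) / ((i:ℂ)+1)
          = -(∑ i ∈ range (n+1), (-1:ℂ)^i * (n.choose i : ℂ) * (i.choose m : ℂ) / ((i:ℂ)+1))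
            - ∑ i ∈ range (n+1), (-1:ℂ)^i * (n.choose i : ℂ) * (i.choose (m+1) : ℂ) / ((i:ℂ)+1) := by
        rw [← Finset.sum_neg_distrib, ← Finset.sum_sub_distrib]
        refine Finset.sum_congr rfl fun i _ => ?_
        rw [Nat.choose_succ_succ]
        push_cast; ring
      rw [e1, e2, ih m, ih (m+1), G_lem n m, G_lem n (m+1)]
      have hcast : ((n + 1 - (m + 1) : ℕ) : ℂ) = ((n - m : ℕ) : ℂ) := by
        congr 1; omega
      rcases lt_trichotomy (m+1) n with h | h | h
      · rw [if_neg (by omega : ¬(m = n)), if_pos (by omega : m < n),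
            if_neg (by omega : ¬(m+1 = n)), if_pos h,
            if_pos (by omega : m ≤ n), if_pos (by omega : m+1 ≤ n),
            if_neg (by omega : ¬(m+1 = n+1)), if_pos (by omega : m+1 < n+1), hcast]
        ring
      · rw [if_neg (by omega : ¬(m = n)), if_pos (by omega : m < n),
            if_pos h,
            if_pos (by omega : m ≤ n), if_pos (by omega : m+1 ≤ n),
            if_neg (by omega : ¬(m+1 = n+1)), if_pos (by omega : m+1 < n+1), hcast]
        ring
      · rcases eq_or_lt_of_le (by omega : n ≤ m) with h2 | h2
        · obtain rfl : m = n := by omega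
          rw [if_pos rfl, if_neg (by omega : ¬(m+1 = m)), if_neg (by omega : ¬(m+1 < m)),
              if_pos le_rfl, if_neg (by omega : ¬(m+1 ≤ m)),
              if_pos rfl, harmonicC_succ]
          ring
        · rw [if_neg (by omega : ¬(m = n)), if_neg (by omega : ¬(m < n)),
              if_neg (by omega : ¬(m+1 = n)), if_neg (by omega : ¬(m+1 < n)),
              if_neg (by omega : ¬(m ≤ n)), if_neg (by omega : ¬(m+1 ≤ n)),
              if_neg (by omega : ¬(m+1 = n+1)), if_neg (by omega : ¬(m+1 < n+1))]
          ring

lemma stirling2_zero_of_lt : ∀ p m, p < m → stirling2 p m = 0 := by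
  intro p
  induction p with
  | zero =>
    intro m h
    match m, h with
    | m + 1, _ => rfl
  | succ p ih =>
    intro m h
    rcases m with _ | m
    · omega
    · show (m + 1) * stirling2 p (m + 1) + stirling2 p m = 0
      rw [ih (m+1) (by omega), ih m (by omega)]
      ring

lemma mul_choose_aux (k m : ℕ) : k * k.choose m = (m+1) * k.choose (m+1) + m * k.choose m := by
  rcases le_or_gt m k with h | h
  · have h1 := Nat.choose_succ_right_eq k m
    have h2 : k - m + m = k := by omega
    calc k * k.choose m = (k - m) * k.choose m + m * k.choose m := by
          rw [← add_mul, h2]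
      _ = (m+1) * k.choose (m+1) + m * k.choose m := by
          rw [mul_comm (k-m), ← h1]; ring
  · rw [Nat.choose_eq_zero_of_lt h, Nat.choose_eq_zero_of_lt (by omega)]
    ring

lemma pow_expand : ∀ p N k : ℕ, p ≤ N →
    k ^ p = ∑ m ∈ range (N+1), stirling2 p m * m.factorial * k.choose m := by
  intro p
  induction p with
  | zero =>
    intro N k _
    rw [Finset.sum_eq_single_of_mem 0 (by simp)]
    · simp [stirling2]
    · intro m _ hm
      rcases m with _ | m
      · omega
      · show stirling2 0 (m+1) * _ * _ = 0
        rw [show stirling2 0 (m+1) = 0 from rfl]; ring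
  | succ p ih =>
    intro N k h
    have hp : p ≤ N := by omega
    have step : k ^ (p+1) = ∑ m ∈ range (N+1),
        (stirling2 p m * m.factorial * ((m+1) * k.choose (m+1)) + stirling2 p m * m.factorial * (m * k.choose m)) := by
      rw [pow_succ, ih N k hp, Finset.sum_mul]
      refine Finset.sum_congr rfl fun m _ => ?_
      have hmc := mul_choose_aux k m
      calc stirling2 p m * m.factorial * k.choose m * k
          = stirling2 p m * m.factorial * (k * k.choose m) := by ring
        _ = _ := by rw [hmc]; ring
    rw [step, Finset.sum_add_distrib]
    -- first sum: drop last term (m = N) which is zero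
    have hfirst : ∑ m ∈ range (N+1), stirling2 p m * m.factorial * ((m+1) * k.choose (m+1))
        = ∑ j ∈ range N, stirling2 p j * (j+1).factorial * k.choose (j+1) := by
      rw [Finset.sum_range_succ, stirling2_zero_of_lt p N (by omega)]
      simp only [zero_mul, add_zero]  -- kills last term? careful: 0 * _ * _ 
      refine Finset.sum_congr rfl fun j _ => ?_
      rw [Nat.factorial_succ]
      ring
    -- second sum: drop first term (m = 0) which is zero
    have hsecond : ∑ m ∈ range (N+1), stirling2 p m * m.factorial * (m * k.choose m)
        = ∑ j ∈ range N, (j+1) * stirling2 p (j+1) * (j+1).factorial * k.choose (j+1) := by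
      rw [Finset.sum_range_succ']
      simp only [mul_zero, zero_mul, add_zero]
      refine Finset.sum_congr rfl fun j _ => ?_
      ring
    rw [hfirst, hsecond, ← Finset.sum_add_distrib]
    -- target: peel m = 0
    rw [Finset.sum_range_succ']
    rw [show stirling2 (p+1) 0 = 0 from rfl]
    simp only [zero_mul, add_zero]
    refine (Finset.sum_congr rfl fun j _ => ?_).symm
    show stirling2 (p+1) (j+1) * _ * _ = _
    rw [show stirling2 (p+1) (j+1) = (j+1) * stirling2 p (j+1) + stirling2 p j from rfl]
    ring

theorem stmt_19 (n p : ℕ) (hn : 1 ≤ n) :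
    ∑ k ∈ Finset.range (n + 1),
        (-1) ^ k * (Nat.choose n k : ℂ) * (k : ℂ) ^ p * harmonicC k =
      (-1) ^ n * (Nat.factorial n : ℂ) * (stirling2 p n : ℂ) * harmonicC n -
        ∑ k ∈ Finset.range n,
          (-1) ^ k * (Nat.factorial k : ℂ) * (stirling2 p k : ℂ) / ((n - k : ℕ) : ℂ) := by
  set N := p + n with hN
  have hexp : ∀ k : ℕ, ((k:ℂ))^p
      = ∑ m ∈ range (N+1), (stirling2 p m : ℂ) * (m.factorial : ℂ) * (k.choose m : ℂ) := by
    intro k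
    have := pow_expand p N k (by omega)
    have h2 : ((k ^ p : ℕ) : ℂ) = ((∑ m ∈ range (N+1), stirling2 p m * m.factorial * k.choose m : ℕ) : ℂ) := by
      exact congrArg (Nat.cast : ℕ → ℂ) this
    push_cast at h2
    exact h2
  have step1 : ∑ k ∈ Finset.range (n + 1), (-1) ^ k * (Nat.choose n k : ℂ) * (k : ℂ) ^ p * harmonicC k
      = ∑ m ∈ range (N+1), (stirling2 p m : ℂ) * (m.factorial : ℂ)
          * ∑ k ∈ range (n+1), (-1:ℂ)^k * (n.choose k : ℂ) * (k.choose m : ℂ) * harmonicC k := by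
    have e1 : ∀ k ∈ range (n+1), (-1:ℂ) ^ k * (Nat.choose n k : ℂ) * (k : ℂ) ^ p * harmonicC k
        = ∑ m ∈ range (N+1), (stirling2 p m : ℂ) * (m.factorial : ℂ)
            * ((-1:ℂ)^k * (n.choose k : ℂ) * (k.choose m : ℂ) * harmonicC k) := by
      intro k _
      rw [hexp k, Finset.mul_sum, Finset.sum_mul]
      refine Finset.sum_congr rfl fun m _ => ?_
      ring
    rw [Finset.sum_congr rfl e1, Finset.sum_comm]
    exact Finset.sum_congr rfl fun m _ => (Finset.mul_sum _ _ _).symm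
  rw [step1]
  have step2 : ∀ m ∈ range (N+1), (stirling2 p m : ℂ) * (m.factorial : ℂ)
          * ∑ k ∈ range (n+1), (-1:ℂ)^k * (n.choose k : ℂ) * (k.choose m : ℂ) * harmonicC k
      = (if m = n then (-1:ℂ)^n * (n.factorial:ℂ) * (stirling2 p n : ℂ) * harmonicC n else 0)
        + (if m < n then -((-1:ℂ)^m * (m.factorial:ℂ) * (stirling2 p m : ℂ) / ((n-m:ℕ):ℂ)) else 0) := by
    intro m _
    rw [F_lem n m]
    rcases lt_trichotomy m n with h | h | h
    · rw [if_neg (by omega : ¬ m = n), if_pos h, if_neg (by omega : ¬ m = n), if_pos h]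
      ring
    · subst h
      rw [if_pos rfl, if_pos rfl, if_neg (lt_irrefl m)]
      ring
    · rw [if_neg (by omega : ¬ m = n), if_neg (by omega : ¬ m < n),
          if_neg (by omega : ¬ m = n), if_neg (by omega : ¬ m < n)]
      ring
  rw [Finset.sum_congr rfl step2, Finset.sum_add_distrib, Finset.sum_ite_eq' (range (N+1)) n]
  rw [if_pos (by simp [hN] : n ∈ range (N+1))]
  have step3 : ∑ m ∈ range (N+1),
        (if m < n then -((-1:ℂ)^m * (m.factorial:ℂ) * (stirling2 p m : ℂ) / ((n-m:ℕ):ℂ)) else 0)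
      = -∑ k ∈ Finset.range n, (-1:ℂ) ^ k * (Nat.factorial k : ℂ) * (stirling2 p k : ℂ) / ((n - k : ℕ) : ℂ) := by
    rw [← Finset.sum_subset (Finset.range_subset_range.mpr (by omega : n ≤ N+1))
        (fun x _ hx => if_neg (by simp at hx; omega))]
    rw [← Finset.sum_neg_distrib]
    refine Finset.sum_congr rfl fun m hm => ?_
    rw [if_pos (Finset.mem_range.mp hm)]
  rw [step3]
  ring
end
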